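/- Under the GNW model with ‖f‖_∞ ≤ B and noise variance ≤ σ², let b(x) = S(f,x) - f(x) and Bias = E[f̂_GNW(x)] - f(x). Then 0 ≤ (b(x) - Bias)² ≤ B² exp(-2d(x)), and similarly 0 ≤ v(x) - Var[f̂_GNW(x)] ≤ B² exp(-2d(x)), where d(x) = n c(x). -/

import Mathlib

open MeasureTheory ProbabilityTheory

/-- The Graphical Nadaraya–Watson estimator: average of the labels
`y_i = f(x_i) + ε_i` over the neighbors (`a_i = 1`), or `0` if there are none. -/
noncomputable def gnwEst {Ω : Type*} {d n : ℕ}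
    (x : Fin n → Ω → EuclideanSpace ℝ (Fin d)) (ε a : Fin n → Ω → ℝ)
    (f : EuclideanSpace ℝ (Fin d) → ℝ) (ω : Ω) : ℝ :=
  if 0 < ∑ i, a i ω then (∑ i, (f (x i ω) + ε i ω) * a i ω) / (∑ i, a i ω) else 0

private lemma aux_integral_prod {Ω : Type*} [MeasurableSpace Ω] {μ : Measure Ω}
    [IsProbabilityMeasure μ] {ι : Type*} {g : ι → Ω → ℝ} (hg : ∀ i, Measurable (g i))
    (h : iIndepFun g μ) (t : Finset ι) :
    ∫ ω, ∏ i ∈ t, g i ω ∂μ = ∏ i ∈ t, ∫ ω, g i ω ∂μ := by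
  classical
  induction t using Finset.induction_on with
  | empty => simp
  | @insert i t hi ih =>
    have hX : IndepFun (g i) (∏ j ∈ t, g j) μ :=
      (h.indepFun_finsetProd_of_notMem hg hi).symm
    have hmeas : AEStronglyMeasurable (∏ j ∈ t, g j) μ := by
      rw [show (∏ j ∈ t, g j) = fun a => ∏ j ∈ t, g j a from funext fun a => Finset.prod_apply a t g]
      exact (Finset.measurable_prod t (fun j _ => hg j)).aestronglyMeasurable
    have h2 := hX.integral_fun_mul_eq_mul_integral (hg i).aestronglyMeasurable hmeas
    simp only [Finset.prod_apply] at h2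
    have h3 : integral μ (∏ j ∈ t, g j) = ∫ ω, ∏ j ∈ t, g j ω ∂μ := by
      congr 1; exact funext fun a => Finset.prod_apply a t g
    simp only [Finset.prod_insert hi]
    rw [h2, ih]

private lemma aux_bound {B c S : ℝ} {n : ℕ} (hB : 0 ≤ B) (hS : |S| ≤ B)
    (hc0 : 0 ≤ c) (hc1 : c ≤ 1) :
    (S * (1 - c) ^ n) ^ 2 ≤ B ^ 2 * Real.exp (-(2 * (n * c))) := by
  have h1 : (0:ℝ) ≤ 1 - c := by linarith
  have h2 : 1 - c ≤ Real.exp (-c) := by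
    have := Real.add_one_le_exp (-c); linarith
  have h3 : (1 - c) ^ n ≤ Real.exp (-c) ^ n := pow_le_pow_left₀ h1 h2 n
  have h4 : Real.exp (-c) ^ n = Real.exp (-(n * c)) := by
    rw [← Real.exp_nat_mul]; ring_nf
  have h5 : ((1 - c) ^ n) ^ 2 ≤ Real.exp (-(n * c)) ^ 2 := by
    apply pow_le_pow_left₀ (pow_nonneg h1 n) (h3.trans_eq h4)
  have h6 : S ^ 2 ≤ B ^ 2 := by
    have := pow_le_pow_left₀ (abs_nonneg S) hS 2
    rwa [sq_abs] at this
  have h7 : Real.exp (-(n * c)) ^ 2 = Real.exp (-(2 * (n * c))) := by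
    rw [sq, ← Real.exp_add]; ring_nf
  calc (S * (1 - c) ^ n) ^ 2 = S ^ 2 * ((1 - c) ^ n) ^ 2 := by ring
    _ ≤ B ^ 2 * Real.exp (-(n * c)) ^ 2 :=
        mul_le_mul h6 h5 (by positivity) (by positivity)
    _ = B ^ 2 * Real.exp (-(2 * (n * c))) := by rw [h7]

private lemma aux_master
    {Ω : Type*} [MeasurableSpace Ω]
    (μ : Measure Ω) [IsProbabilityMeasure μ]
    {d n : ℕ} (hn : 0 < n)
    (x : Fin n → Ω → EuclideanSpace ℝ (Fin d)) (ε a : Fin n → Ω → ℝ)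
    (hxm : ∀ i, Measurable (x i)) (hεm : ∀ i, Measurable (ε i))
    (ham : ∀ i, Measurable (a i))
    (hindep : ProbabilityTheory.iIndepFun
      (fun i ω => (x i ω, ε i ω, a i ω)) μ)
    (hid : ∀ i, ProbabilityTheory.IdentDistrib (fun ω => (x i ω, ε i ω, a i ω))
      (fun ω => (x ⟨0, hn⟩ ω, ε ⟨0, hn⟩ ω, a ⟨0, hn⟩ ω)) μ μ)
    (hbin : ∀ i ω, a i ω = 0 ∨ a i ω = 1)
    (hnoise : ∀ i, ProbabilityTheory.IndepFun (fun ω => (x i ω, a i ω)) (ε i) μ)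
    (hεint : ∀ i, Integrable (ε i) μ)
    (hεL2 : ∀ i, MemLp (ε i) 2 μ)
    (hεmean : ∀ i, ∫ ω, ε i ω ∂μ = 0)
    (f : EuclideanSpace ℝ (Fin d) → ℝ) (hfm : Measurable f)
    (B : ℝ) (hB : ∀ z, |f z| ≤ B)
    (c : ℝ) (hc : c = ∫ ω, a ⟨0, hn⟩ ω ∂μ) (hcpos : 0 < c)
    (S : ℝ) (hS : S = (∫ ω, f (x ⟨0, hn⟩ ω) * a ⟨0, hn⟩ ω ∂μ) / c) :
    (∫ ω, gnwEst x ε a f ω ∂μ = S * (1 - (1 - c) ^ n)) ∧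
      MemLp (gnwEst x ε a f) 2 μ := by
  classical
  set i0 : Fin n := ⟨0, hn⟩
  have hBnn : (0:ℝ) ≤ B := le_trans (abs_nonneg _) (hB 0)
  have ha0 : ∀ i ω, 0 ≤ a i ω := fun i ω => by rcases hbin i ω with h | h <;> simp [h]
  have ha1 : ∀ i ω, a i ω ≤ 1 := fun i ω => by rcases hbin i ω with h | h <;> simp [h]
  have hs0 : ∀ (i : Fin n) ω, 0 ≤ ∑ j ∈ Finset.univ.erase i, a j ω :=
    fun i ω => Finset.sum_nonneg fun j _ => ha0 j ω
  have hden : ∀ (i : Fin n) ω, (0:ℝ) < 1 + ∑ j ∈ Finset.univ.erase i, a j ω :=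
    fun i ω => by linarith [hs0 i ω]
  set w : Fin n → Ω → ℝ :=
    fun i ω => a i ω * (1 + ∑ j ∈ Finset.univ.erase i, a j ω)⁻¹ with hwdef
  have hw0 : ∀ i ω, 0 ≤ w i ω := fun i ω =>
    mul_nonneg (ha0 i ω) (le_of_lt (inv_pos.2 (hden i ω)))
  have hw1 : ∀ i ω, w i ω ≤ 1 := fun i ω =>
    mul_le_one₀ (ha1 i ω) (le_of_lt (inv_pos.2 (hden i ω)))
      (inv_le_one_of_one_le₀ (by linarith [hs0 i ω]))
  have hsplit : ∀ (i : Fin n) ω, (∑ j, a j ω) = a i ω + ∑ j ∈ Finset.univ.erase i, a j ω :=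
    fun i ω => (Finset.add_sum_erase _ _ (Finset.mem_univ i)).symm
  have hterm : ∀ (i : Fin n) ω, 0 < (∑ j, a j ω) → a i ω / (∑ j, a j ω) = w i ω := by
    intro i ω hpos
    rcases hbin i ω with h | h
    · simp [hwdef, h]
    · rw [hwdef]
      simp only
      rw [hsplit i ω, h, div_eq_mul_inv]
  have hFrep : ∀ ω, gnwEst x ε a f ω = ∑ i, (f (x i ω) + ε i ω) * w i ω := by
    intro ω
    unfold gnwEst
    by_cases hpos : 0 < ∑ i, a i ω
    · rw [if_pos hpos, Finset.sum_div]
      refine Finset.sum_congr rfl fun i _ => ?_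
      rw [mul_div_assoc, hterm i ω hpos]
    · rw [if_neg hpos]
      have hz : ∀ i ∈ Finset.univ, a i ω = 0 := by
        have h0 : ∑ i, a i ω = 0 :=
          le_antisymm (not_lt.1 hpos) (Finset.sum_nonneg fun i _ => ha0 i ω)
        exact fun i hi => (Finset.sum_eq_zero_iff_of_nonneg (fun j _ => ha0 j ω)).1 h0 i hi
      symm
      refine Finset.sum_eq_zero fun i _ => ?_
      simp [hwdef, hz i (Finset.mem_univ i)]
  have hwsum : ∀ ω, ∑ i, w i ω = 1 - ∏ i, (1 - a i ω) := by
    intro ω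
    by_cases hpos : 0 < ∑ i, a i ω
    · obtain ⟨i, hi⟩ : ∃ i, a i ω = 1 := by
        by_contra hcon
        push_neg at hcon
        have hz : ∀ i ∈ Finset.univ, a i ω = 0 :=
          fun i _ => (hbin i ω).resolve_right (hcon i)
        rw [Finset.sum_eq_zero hz] at hpos
        exact lt_irrefl 0 hpos
      have hprod : ∏ i, (1 - a i ω) = 0 :=
        Finset.prod_eq_zero (Finset.mem_univ i) (by simp [hi])
      rw [hprod, sub_zero]
      calc ∑ i, w i ω = ∑ i, a i ω / (∑ j, a j ω) :=
            Finset.sum_congr rfl fun i _ => (hterm i ω hpos).symm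
        _ = (∑ i, a i ω) / (∑ j, a j ω) := (Finset.sum_div _ _ _).symm
        _ = 1 := div_self (ne_of_gt hpos)
    · have h0 : ∑ i, a i ω = 0 :=
        le_antisymm (not_lt.1 hpos) (Finset.sum_nonneg fun i _ => ha0 i ω)
      have hz : ∀ i, a i ω = 0 :=
        fun i => (Finset.sum_eq_zero_iff_of_nonneg (fun j _ => ha0 j ω)).1 h0 i
          (Finset.mem_univ i)
      simp [hwdef, hz]
  -- measurability
  have hinvm : ∀ i : Fin n, Measurable fun ω => (1 + ∑ j ∈ Finset.univ.erase i, a j ω)⁻¹ :=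
    fun i => (measurable_const.add (Finset.measurable_sum _ fun j _ => ham j)).inv
  have hwm : ∀ i, Measurable (w i) := fun i => (ham i).mul (hinvm i)
  have htermm : ∀ i, Measurable fun ω => (f (x i ω) + ε i ω) * w i ω :=
    fun i => ((hfm.comp (hxm i)).add (hεm i)).mul (hwm i)
  -- independence key
  set T : Fin n → Ω → EuclideanSpace ℝ (Fin d) × ℝ × ℝ :=
    fun i ω => (x i ω, ε i ω, a i ω) with hTdef
  have hTm : ∀ i, Measurable (T i) := fun i => (hxm i).prodMk ((hεm i).prodMk (ham i))
  have key : ∀ (i : Fin n) (φ : (EuclideanSpace ℝ (Fin d) × ℝ × ℝ) → ℝ), Measurable φ →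
      IndepFun (fun ω => φ (T i ω)) (fun ω => (1 + ∑ j ∈ Finset.univ.erase i, a j ω)⁻¹) μ := by
    intro i φ hφ
    have base := hindep.indepFun_finset {i} (Finset.univ.erase i)
      (Finset.disjoint_singleton_left.mpr (Finset.notMem_erase i _)) hTm
    have h1 : Measurable fun v : {j : Fin n // j ∈ ({i} : Finset (Fin n))} →
        EuclideanSpace ℝ (Fin d) × ℝ × ℝ =>
        φ (v ⟨i, Finset.mem_singleton_self i⟩) := hφ.comp (measurable_pi_apply _)
    have h2 : Measurable fun v : {j : Fin n // j ∈ Finset.univ.erase i} →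
        (EuclideanSpace ℝ (Fin d) × ℝ × ℝ) => (1 + ∑ j, (v j).2.2)⁻¹ :=
      (measurable_const.add (Finset.measurable_sum _ fun j _ =>
        (measurable_pi_apply j).snd.snd)).inv
    have h3 := base.comp h1 h2
    have heq : (fun ω => (1 + ∑ j : {j : Fin n // j ∈ Finset.univ.erase i}, a j.1 ω)⁻¹)
        = fun ω => (1 + ∑ j ∈ Finset.univ.erase i, a j ω)⁻¹ := by
      funext ω
      rw [Finset.sum_coe_sort (Finset.univ.erase i) (fun j => a j ω)]
    rw [← heq]
    exact h3
  -- basic integrability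
  have haabs : ∀ i ω, |a i ω| ≤ 1 := fun i ω => abs_le.mpr ⟨by linarith [ha0 i ω], ha1 i ω⟩
  have ha_int : ∀ i, Integrable (a i) μ := fun i =>
    (integrable_const (1:ℝ)).mono' (ham i).aestronglyMeasurable
      (Filter.Eventually.of_forall fun ω => by
        rw [Real.norm_eq_abs]; exact haabs i ω)
  have hfa_int : ∀ i, Integrable (fun ω => f (x i ω) * a i ω) μ := fun i =>
    (integrable_const B).mono' ((hfm.comp (hxm i)).mul (ham i)).aestronglyMeasurable
      (Filter.Eventually.of_forall fun ω => by
        rw [Real.norm_eq_abs, abs_mul]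
        calc |f (x i ω)| * |a i ω| ≤ B * 1 :=
              mul_le_mul (hB _) (haabs i ω) (abs_nonneg _) hBnn
          _ = B := mul_one B)
  have hεa_int : ∀ i, Integrable (fun ω => ε i ω * a i ω) μ := fun i =>
    (hεint i).abs.mono' ((hεm i).mul (ham i)).aestronglyMeasurable
      (Filter.Eventually.of_forall fun ω => by
        rw [Real.norm_eq_abs, abs_mul]
        exact mul_le_of_le_one_right (abs_nonneg _) (haabs i ω))
  have hwint : ∀ i, Integrable (w i) μ := fun i =>
    (integrable_const (1:ℝ)).mono' (hwm i).aestronglyMeasurable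
      (Filter.Eventually.of_forall fun ω => by
        rw [Real.norm_eq_abs, abs_of_nonneg (hw0 i ω)]; exact hw1 i ω)
  -- identically-distributed consequences
  have hE_a : ∀ i, ∫ ω, a i ω ∂μ = c := by
    intro i
    have h := ((hid i).comp
      (measurable_snd.snd : Measurable fun p : EuclideanSpace ℝ (Fin d) × ℝ × ℝ => p.2.2)).integral_eq
    rw [hc]; exact h
  have hE_fa : ∀ i, ∫ ω, f (x i ω) * a i ω ∂μ = S * c := by
    intro i
    have hmap : Measurable fun p : EuclideanSpace ℝ (Fin d) × ℝ × ℝ => f p.1 * p.2.2 :=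
      (hfm.comp measurable_fst).mul measurable_snd.snd
    have h := ((hid i).comp hmap).integral_eq
    rw [hS]
    rw [div_mul_cancel₀ _ (ne_of_gt hcpos)]
    exact h
  have hE_εa : ∀ i, ∫ ω, ε i ω * a i ω ∂μ = 0 := by
    intro i
    have hia : IndepFun (ε i) (a i) μ :=
      ((hnoise i).comp measurable_snd measurable_id).symm
    rw [hia.integral_fun_mul_eq_mul_integral (hεm i).aestronglyMeasurable (ham i).aestronglyMeasurable,
      hεmean i, zero_mul]
  have hinv0 : ∀ (i : Fin n) ω, 0 ≤ (1 + ∑ j ∈ Finset.univ.erase i, a j ω)⁻¹ :=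
    fun i ω => le_of_lt (inv_pos.2 (hden i ω))
  have hinv1 : ∀ (i : Fin n) ω, (1 + ∑ j ∈ Finset.univ.erase i, a j ω)⁻¹ ≤ 1 :=
    fun i ω => inv_le_one_of_one_le₀ (by linarith [hs0 i ω])
  have hkey_f : ∀ i : Fin n, ∫ ω, (f (x i ω) * a i ω) *
      (1 + ∑ j ∈ Finset.univ.erase i, a j ω)⁻¹ ∂μ
      = (S * c) * ∫ ω, (1 + ∑ j ∈ Finset.univ.erase i, a j ω)⁻¹ ∂μ := by
    intro i
    have hmap : Measurable fun p : EuclideanSpace ℝ (Fin d) × ℝ × ℝ => f p.1 * p.2.2 :=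
      (hfm.comp measurable_fst).mul measurable_snd.snd
    have h := (key i _ hmap).integral_fun_mul_eq_mul_integral (hmap.comp (hTm i)).aestronglyMeasurable
      (hinvm i).aestronglyMeasurable
    simp only [hTdef] at h
    rw [hE_fa i] at h
    exact h
  have hkey_ε : ∀ i : Fin n, ∫ ω, (ε i ω * a i ω) *
      (1 + ∑ j ∈ Finset.univ.erase i, a j ω)⁻¹ ∂μ = 0 := by
    intro i
    have hmap : Measurable fun p : EuclideanSpace ℝ (Fin d) × ℝ × ℝ => p.2.1 * p.2.2 :=
      measurable_snd.fst.mul measurable_snd.snd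
    have h := (key i _ hmap).integral_fun_mul_eq_mul_integral (hmap.comp (hTm i)).aestronglyMeasurable
      (hinvm i).aestronglyMeasurable
    simp only [hTdef] at h
    rw [hE_εa i, zero_mul] at h
    exact h
  have hkey_a : ∀ i : Fin n, ∫ ω, a i ω *
      (1 + ∑ j ∈ Finset.univ.erase i, a j ω)⁻¹ ∂μ
      = c * ∫ ω, (1 + ∑ j ∈ Finset.univ.erase i, a j ω)⁻¹ ∂μ := by
    intro i
    have hmap : Measurable fun p : EuclideanSpace ℝ (Fin d) × ℝ × ℝ => p.2.2 :=
      measurable_snd.snd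
    have h := (key i _ hmap).integral_fun_mul_eq_mul_integral (hmap.comp (hTm i)).aestronglyMeasurable
      (hinvm i).aestronglyMeasurable
    simp only [hTdef] at h
    rw [hE_a i] at h
    exact h
  have hmain : ∀ i : Fin n, ∫ ω, (f (x i ω) + ε i ω) * w i ω ∂μ = S * ∫ ω, w i ω ∂μ := by
    intro i
    have hfsplit : (fun ω => (f (x i ω) + ε i ω) * w i ω) = fun ω =>
        (f (x i ω) * a i ω) * (1 + ∑ j ∈ Finset.univ.erase i, a j ω)⁻¹
        + (ε i ω * a i ω) * (1 + ∑ j ∈ Finset.univ.erase i, a j ω)⁻¹ := by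
      funext ω
      simp only [hwdef]
      ring
    have hint1 : Integrable (fun ω => (f (x i ω) * a i ω) *
        (1 + ∑ j ∈ Finset.univ.erase i, a j ω)⁻¹) μ :=
      (integrable_const B).mono'
        (((hfm.comp (hxm i)).mul (ham i)).mul (hinvm i)).aestronglyMeasurable
        (Filter.Eventually.of_forall fun ω => by
          rw [Real.norm_eq_abs, abs_mul, abs_mul]
          calc |f (x i ω)| * |a i ω| * |(1 + ∑ j ∈ Finset.univ.erase i, a j ω)⁻¹|
              ≤ B * 1 * 1 := by
                apply mul_le_mul _ _ (abs_nonneg _) (by positivity)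
                · exact mul_le_mul (hB _) (haabs i ω) (abs_nonneg _) hBnn
                · rw [abs_of_nonneg (hinv0 i ω)]; exact hinv1 i ω
            _ = B := by ring)
    have hint2 : Integrable (fun ω => (ε i ω * a i ω) *
        (1 + ∑ j ∈ Finset.univ.erase i, a j ω)⁻¹) μ :=
      (hεint i).abs.mono'
        (((hεm i).mul (ham i)).mul (hinvm i)).aestronglyMeasurable
        (Filter.Eventually.of_forall fun ω => by
          rw [Real.norm_eq_abs, abs_mul, abs_mul]
          calc |ε i ω| * |a i ω| * |(1 + ∑ j ∈ Finset.univ.erase i, a j ω)⁻¹|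
              ≤ |ε i ω| * 1 * 1 := by
                apply mul_le_mul _ _ (abs_nonneg _) (by positivity)
                · exact mul_le_mul_of_nonneg_left (haabs i ω) (abs_nonneg _)
                · rw [abs_of_nonneg (hinv0 i ω)]; exact hinv1 i ω
            _ = |ε i ω| := by ring)
    rw [hfsplit, integral_add hint1 hint2, hkey_f i, hkey_ε i, add_zero]
    have : ∫ ω, w i ω ∂μ = c * ∫ ω, (1 + ∑ j ∈ Finset.univ.erase i, a j ω)⁻¹ ∂μ := by
      simp only [hwdef]
      exact hkey_a i
    rw [this]
    ring
  have hterm_int : ∀ i : Fin n, Integrable (fun ω => (f (x i ω) + ε i ω) * w i ω) μ := by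
    intro i
    refine ((integrable_const B).add (hεint i).abs).mono' (htermm i).aestronglyMeasurable
      (Filter.Eventually.of_forall fun ω => ?_)
    rw [Real.norm_eq_abs, abs_mul, abs_of_nonneg (hw0 i ω)]
    calc |f (x i ω) + ε i ω| * w i ω ≤ (B + |ε i ω|) * 1 := by
          apply mul_le_mul _ (hw1 i ω) (hw0 i ω) (by positivity)
          exact (abs_add_le _ _).trans (by gcongr; exact hB _)
      _ = B + |ε i ω| := mul_one _
  have hprod_int : Integrable (fun ω => ∏ i, (1 - a i ω)) μ := by
    refine (integrable_const (1:ℝ)).mono'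
      (Finset.measurable_prod _ fun i _ => measurable_const.sub (ham i)).aestronglyMeasurable
      (Filter.Eventually.of_forall fun ω => ?_)
    rw [Real.norm_eq_abs, Finset.abs_prod]
    exact Finset.prod_le_one (fun i _ => abs_nonneg _) fun i _ =>
      abs_le.mpr ⟨by linarith [ha1 i ω], by linarith [ha0 i ω]⟩
  have hprodE : ∫ ω, ∏ i, (1 - a i ω) ∂μ = (1 - c) ^ n := by
    have hIndep1a : iIndepFun (fun (i : Fin n) ω => 1 - a i ω) μ := by
      have := hindep.comp (fun (_ : Fin n) (p : EuclideanSpace ℝ (Fin d) × ℝ × ℝ) => 1 - p.2.2)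
        (fun i => measurable_const.sub measurable_snd.snd)
      exact this
    rw [aux_integral_prod (g := fun i ω => 1 - a i ω) (fun i => measurable_const.sub (ham i)) hIndep1a Finset.univ]
    have h1 : ∀ i : Fin n, ∫ ω, (1 - a i ω) ∂μ = 1 - c := by
      intro i
      rw [integral_sub (integrable_const 1) (ha_int i), hE_a i, integral_const]
      simp
    rw [Finset.prod_congr rfl fun i _ => h1 i, Finset.prod_const, Finset.card_univ,
      Fintype.card_fin]

  have hFm : Measurable (gnwEst x ε a f) := by
    rw [show gnwEst x ε a f = fun ω => ∑ i, (f (x i ω) + ε i ω) * w i ω from funext hFrep]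
    exact Finset.measurable_sum _ fun i _ => htermm i
  have hF2 : MemLp (gnwEst x ε a f) 2 μ := by
    have hG : MemLp (fun ω => B + ∑ i, |ε i ω|) 2 μ := by
      refine (memLp_const B).add ?_
      exact memLp_finset_sum Finset.univ fun i _ => (hεL2 i).abs
    refine hG.of_le hFm.aestronglyMeasurable (Filter.Eventually.of_forall fun ω => ?_)
    rw [Real.norm_eq_abs, Real.norm_eq_abs, hFrep ω]
    have hb1 : |∑ i, (f (x i ω) + ε i ω) * w i ω| ≤ ∑ i, (B + |ε i ω|) * w i ω := by
      refine (Finset.abs_sum_le_sum_abs _ _).trans (Finset.sum_le_sum fun i _ => ?_)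
      rw [abs_mul, abs_of_nonneg (hw0 i ω)]
      exact mul_le_mul_of_nonneg_right ((abs_add_le _ _).trans (by gcongr; exact hB _)) (hw0 i ω)
    have hb2 : ∑ i, (B + |ε i ω|) * w i ω ≤ B + ∑ i, |ε i ω| := by
      have e1 : ∑ i, (B + |ε i ω|) * w i ω = B * (∑ i, w i ω) + ∑ i, |ε i ω| * w i ω := by
        rw [Finset.mul_sum, ← Finset.sum_add_distrib]
        exact Finset.sum_congr rfl fun i _ => by ring
      have e2 : ∑ i, w i ω ≤ 1 := by
        rw [hwsum ω]
        have h0 : 0 ≤ ∏ i, (1 - a i ω) :=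
          Finset.prod_nonneg fun i _ => by linarith [ha1 i ω]
        linarith
      have e3 : ∑ i, |ε i ω| * w i ω ≤ ∑ i, |ε i ω| :=
        Finset.sum_le_sum fun i _ => mul_le_of_le_one_right (abs_nonneg _) (hw1 i ω)
      have e4 : B * (∑ i, w i ω) ≤ B := by
        calc B * (∑ i, w i ω) ≤ B * 1 := mul_le_mul_of_nonneg_left e2 hBnn
          _ = B := mul_one B
      rw [e1]; linarith
    exact (hb1.trans hb2).trans (le_abs_self _)
  refine ⟨?_, hF2⟩
  calc ∫ ω, gnwEst x ε a f ω ∂μ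
      = ∫ ω, ∑ i, (f (x i ω) + ε i ω) * w i ω ∂μ :=
        integral_congr_ae (Filter.Eventually.of_forall hFrep)
    _ = ∑ i, ∫ ω, (f (x i ω) + ε i ω) * w i ω ∂μ :=
        integral_finset_sum _ fun i _ => hterm_int i
    _ = ∑ i, S * ∫ ω, w i ω ∂μ := Finset.sum_congr rfl fun i _ => hmain i
    _ = S * ∑ i, ∫ ω, w i ω ∂μ := (Finset.mul_sum _ _ _).symm
    _ = S * ∫ ω, ∑ i, w i ω ∂μ := by rw [integral_finset_sum _ fun i _ => hwint i]
    _ = S * ∫ ω, (1 - ∏ i, (1 - a i ω)) ∂μ := by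
        rw [integral_congr_ae (Filter.Eventually.of_forall hwsum)]
    _ = S * (1 - (1 - c) ^ n) := by
        rw [integral_sub (integrable_const 1) hprod_int, integral_const, hprodE]
        simp


/-- The bias and variance proxies of GNW are close to the true bias and variance:
with `b x = S - f x`, `Bias = E[fhat] - f x`, `v x = E[(fhat - S)^2]` and
`Var = E[(fhat - E fhat)^2]`, both `(b - Bias)^2` and `v - Var` lie in
`[0, B^2 * exp (-2 * d x)]`, where `d x = n * c`. -/
theorem gnw_proxies_close {Ω : Type*} [MeasurableSpace Ω]
    (μ : Measure Ω) [IsProbabilityMeasure μ]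
    {d n : ℕ} (hn : 0 < n)
    (x : Fin n → Ω → EuclideanSpace ℝ (Fin d)) (ε a : Fin n → Ω → ℝ)
    (hxm : ∀ i, Measurable (x i)) (hεm : ∀ i, Measurable (ε i))
    (ham : ∀ i, Measurable (a i))
    (hindep : ProbabilityTheory.iIndepFun
      (fun i ω => (x i ω, ε i ω, a i ω)) μ)
    (hid : ∀ i, ProbabilityTheory.IdentDistrib (fun ω => (x i ω, ε i ω, a i ω))
      (fun ω => (x ⟨0, hn⟩ ω, ε ⟨0, hn⟩ ω, a ⟨0, hn⟩ ω)) μ μ)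
    (hbin : ∀ i ω, a i ω = 0 ∨ a i ω = 1)
    (hnoise : ∀ i, ProbabilityTheory.IndepFun (fun ω => (x i ω, a i ω)) (ε i) μ)
    (hεint : ∀ i, Integrable (ε i) μ)
    (hεL2 : ∀ i, MemLp (ε i) 2 μ)
    (hεmean : ∀ i, ∫ ω, ε i ω ∂μ = 0)
    (k : EuclideanSpace ℝ (Fin d) → ℝ)
    (hcond : ∀ i, μ[a i|MeasurableSpace.comap (x i) inferInstance]
      =ᵐ[μ] fun ω => k (x i ω))
    (f : EuclideanSpace ℝ (Fin d) → ℝ) (hfm : Measurable f)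
    (B : ℝ) (hB : ∀ z, |f z| ≤ B)
    (c : ℝ) (hc : c = ∫ ω, a ⟨0, hn⟩ ω ∂μ) (hcpos : 0 < c)
    (S : ℝ) (hS : S = (∫ ω, f (x ⟨0, hn⟩ ω) * a ⟨0, hn⟩ ω ∂μ) / c)
    (σ : ℝ) (hεvar : ∀ i, ∫ ω, (ε i ω) ^ 2 ∂μ ≤ σ ^ 2)
    (xpt : EuclideanSpace ℝ (Fin d)) :
    (0 ≤ ((S - f xpt) - ((∫ ω, gnwEst x ε a f ω ∂μ) - f xpt)) ^ 2 ∧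
      ((S - f xpt) - ((∫ ω, gnwEst x ε a f ω ∂μ) - f xpt)) ^ 2
        ≤ B ^ 2 * Real.exp (-(2 * (n * c)))) ∧
    (0 ≤ (∫ ω, (gnwEst x ε a f ω - S) ^ 2 ∂μ)
        - ∫ ω, (gnwEst x ε a f ω - ∫ ω', gnwEst x ε a f ω' ∂μ) ^ 2 ∂μ ∧
      (∫ ω, (gnwEst x ε a f ω - S) ^ 2 ∂μ)
        - (∫ ω, (gnwEst x ε a f ω - ∫ ω', gnwEst x ε a f ω' ∂μ) ^ 2 ∂μ)
        ≤ B ^ 2 * Real.exp (-(2 * (n * c)))) := by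
  classical
  set i0 : Fin n := ⟨0, hn⟩
  obtain ⟨hm, hF2⟩ := aux_master μ hn x ε a hxm hεm ham hindep hid hbin hnoise hεint
    hεL2 hεmean f hfm B hB c hc hcpos S hS
  set F : Ω → ℝ := gnwEst x ε a f with hFdef
  set m : ℝ := ∫ ω', F ω' ∂μ with hmdef
  have hBnn : (0:ℝ) ≤ B := le_trans (abs_nonneg _) (hB 0)
  have ha0 : ∀ ω, 0 ≤ a i0 ω := fun ω => by rcases hbin i0 ω with h | h <;> simp [h]
  have ha1 : ∀ ω, a i0 ω ≤ 1 := fun ω => by rcases hbin i0 ω with h | h <;> simp [h]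
  have ha_int : Integrable (a i0) μ :=
    (integrable_const (1:ℝ)).mono' (ham i0).aestronglyMeasurable
      (Filter.Eventually.of_forall fun ω => by
        rw [Real.norm_eq_abs]; exact abs_le.mpr ⟨by linarith [ha0 ω], ha1 ω⟩)
  have hfa_int : Integrable (fun ω => f (x i0 ω) * a i0 ω) μ :=
    (integrable_const B).mono' ((hfm.comp (hxm i0)).mul (ham i0)).aestronglyMeasurable
      (Filter.Eventually.of_forall fun ω => by
        rw [Real.norm_eq_abs, abs_mul]
        calc |f (x i0 ω)| * |a i0 ω| ≤ B * 1 :=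
              mul_le_mul (hB _) (abs_le.mpr ⟨by linarith [ha0 ω], ha1 ω⟩) (abs_nonneg _) hBnn
          _ = B := mul_one B)
  have hc1 : c ≤ 1 := by
    rw [hc]
    calc ∫ ω, a i0 ω ∂μ ≤ ∫ _ω, (1:ℝ) ∂μ :=
          integral_mono ha_int (integrable_const 1) fun ω => ha1 ω
      _ = 1 := by simp
  have hSb : |S| ≤ B := by
    rw [hS, abs_div, abs_of_pos hcpos, div_le_iff₀ hcpos]
    calc |∫ ω, f (x i0 ω) * a i0 ω ∂μ| ≤ ∫ ω, |f (x i0 ω) * a i0 ω| ∂μ := by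
          simpa only [Real.norm_eq_abs] using
            norm_integral_le_integral_norm (μ := μ) fun ω => f (x i0 ω) * a i0 ω
      _ ≤ ∫ ω, B * a i0 ω ∂μ := by
          refine integral_mono hfa_int.abs (ha_int.const_mul B) fun ω => ?_
          rw [abs_mul, abs_of_nonneg (ha0 ω)]
          exact mul_le_mul_of_nonneg_right (hB _) (ha0 ω)
      _ = B * c := by rw [integral_const_mul, ← hc]
  have hdiff : S - m = S * (1 - c) ^ n := by rw [hm]; ring
  have hbd : (S - m) ^ 2 ≤ B ^ 2 * Real.exp (-(2 * (n * c))) := by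
    rw [hdiff]; exact aux_bound hBnn hSb hcpos.le hc1
  have hFi : Integrable F μ := hF2.integrable one_le_two
  have h1 : Integrable (fun ω => (F ω - S) ^ 2) μ := (hF2.sub (memLp_const S)).integrable_sq
  have h2 : Integrable (fun ω => (F ω - m) ^ 2) μ := (hF2.sub (memLp_const m)).integrable_sq
  have hint3 : Integrable (fun ω => (S - m) * ((S + m) - 2 * F ω)) μ :=
    ((integrable_const (S + m)).sub (hFi.const_mul 2)).const_mul (S - m)
  have hvar : ∫ ω, (F ω - S) ^ 2 ∂μ - ∫ ω, (F ω - m) ^ 2 ∂μ = (S - m) ^ 2 := by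
    have hcalc : ∫ ω, (F ω - S) ^ 2 ∂μ
        = ∫ ω, ((F ω - m) ^ 2 + (S - m) * ((S + m) - 2 * F ω)) ∂μ :=
      integral_congr_ae (Filter.Eventually.of_forall fun ω => by ring)
    have hlin : ∫ ω, (S - m) * ((S + m) - 2 * F ω) ∂μ = (S - m) * (S - m) := by
      rw [integral_const_mul, integral_sub (integrable_const (S + m)) (hFi.const_mul 2),
        integral_const_mul, integral_const]
      simp only [probReal_univ, one_smul]
      rw [← hmdef]
      ring
    rw [hcalc, integral_add h2 hint3, hlin]
    ring
  have hgoal1 : (S - f xpt) - (m - f xpt) = S - m := by ring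
  constructor
  · constructor
    · exact sq_nonneg _
    · rw [show (S - f xpt) - (m - f xpt) = S - m from by ring]
      exact hbd
  · constructor
    · rw [hvar]; exact sq_nonneg _
    · rw [hvar]; exact hbd
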